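/- Let $L$ be the Laplacian of a connected weighted graph on vertex set $V$, let $S \subseteq V$, and let $L_S$ denote the Schur complement of $L$ onto $S$. Then for any vector $x \in \mathbb{R}^V$ supported on $S$ with $x^T \mathbf{1} = 0$, we have $x^T L^{\dagger} x = x_S^T L_S^{\dagger} x_S$, where $x_S$ is the restriction of $x$ to coordinates in $S$ and $\dagger$ denotes the Moore–Penrose pseudoinverse. -/
import Mathlib


open Matrix MeasureTheory
open scoped Classical

/-- The (weighted) Laplacian matrix of the weighted graph on `V` with weights `c`. -/
noncomputable def lapl {V : Type*} [Fintype V] [DecidableEq V] (c : V → V → ℝ) :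
    Matrix V V ℝ :=
  fun u v => if u = v then ∑ w, c u w else -c u v

/-- The graph described by `L` is connected: the kernel of `L` consists of constants. -/
def LapConnected {V : Type*} [Fintype V] (L : Matrix V V ℝ) : Prop :=
  ∀ x : V → ℝ, L *ᵥ x = 0 → ∃ k : ℝ, ∀ v, x v = k

/-- The Schur complement of `L` onto the rows and columns indexed by `S`,
eliminating the vertices outside of `S`. -/
noncomputable def schur {V : Type*} [Fintype V] [DecidableEq V]
    (L : Matrix V V ℝ) (S : Set V) : Matrix S S ℝ :=
  (Matrix.of fun i j : S => L i.1 j.1)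
    - (Matrix.of fun (i : S) (j : {v : V // v ∉ S}) => L i.1 j.1)
        * (Matrix.of fun i j : {v : V // v ∉ S} => L i.1 j.1)⁻¹
        * (Matrix.of fun (i : {v : V // v ∉ S}) (j : S) => L i.1 j.1)

/-- `B` is the Moore–Penrose pseudoinverse of `A`. -/
def IsMPInv {n : Type*} [Fintype n] (A B : Matrix n n ℝ) : Prop :=
  A * B * A = A ∧ B * A * B = B ∧ (A * B)ᵀ = A * B ∧ (B * A)ᵀ = B * A

lemma qps_sum_split {V : Type*} [Fintype V] (p : V → Prop) (f : V → ℝ) :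
    ∑ v, f v = (∑ i : {v // p v}, f i.1) + ∑ j : {v // ¬ p v}, f j.1 := by
  rw [← Equiv.sum_comp (Equiv.sumCompl p) f, Fintype.sum_sum_type]
  simp [Equiv.sumCompl]

lemma lapl_mulVec {V : Type*} [Fintype V] [DecidableEq V] (c : V → V → ℝ)
    (hdiag : ∀ v, c v v = 0) (x : V → ℝ) (u : V) :
    (lapl c *ᵥ x) u = ∑ v, c u v * (x u - x v) := by
  have h : ∀ v, (if u = v then ∑ w, c u w else -c u v) * x v
      = (if u = v then (∑ w, c u w + c u v) * x v else 0) - c u v * x v := by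
    intro v; split <;> ring
  simp only [lapl, mulVec, dotProduct, of_apply]
  rw [Finset.sum_congr rfl (fun v _ => h v), Finset.sum_sub_distrib,
    Finset.sum_ite_eq]
  simp only [Finset.mem_univ, if_true, hdiag u, add_zero]
  rw [Finset.sum_mul, ← Finset.sum_sub_distrib]
  exact Finset.sum_congr rfl fun v _ => by ring

lemma lapl_symm {V : Type*} [Fintype V] [DecidableEq V] (c : V → V → ℝ)
    (hsymm : ∀ u v, c u v = c v u) : (lapl c)ᵀ = lapl c := by
  ext u v
  by_cases h : u = v
  · subst h; simp [lapl, transpose_apply]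
  · simp [lapl, transpose_apply, h, Ne.symm h, hsymm u v]

lemma lapl_apply_symm {V : Type*} [Fintype V] [DecidableEq V] (c : V → V → ℝ)
    (hsymm : ∀ u v, c u v = c v u) (u v : V) : lapl c u v = lapl c v u := by
  have := lapl_symm c hsymm
  exact congrFun (congrFun this v) u

lemma lapl_ones {V : Type*} [Fintype V] [DecidableEq V] (c : V → V → ℝ)
    (hdiag : ∀ v, c v v = 0) : lapl c *ᵥ (fun _ => (1:ℝ)) = 0 := by
  funext u; rw [lapl_mulVec c hdiag]; simp

lemma lapl_quad {V : Type*} [Fintype V] [DecidableEq V] (c : V → V → ℝ)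
    (hsymm : ∀ u v, c u v = c v u) (hdiag : ∀ v, c v v = 0) (x : V → ℝ) :
    x ⬝ᵥ (lapl c *ᵥ x) = (1/2) * ∑ u, ∑ v, c u v * (x u - x v)^2 := by
  have h1 : x ⬝ᵥ (lapl c *ᵥ x) = ∑ u, ∑ v, c u v * (x u * (x u - x v)) := by
    simp only [dotProduct, lapl_mulVec c hdiag, Finset.mul_sum]
    exact Finset.sum_congr rfl fun u _ => Finset.sum_congr rfl fun v _ => by ring
  have h2 : x ⬝ᵥ (lapl c *ᵥ x) = ∑ u, ∑ v, c u v * (x v * (x v - x u)) := by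
    rw [h1, Finset.sum_comm]
    exact Finset.sum_congr rfl fun u _ => Finset.sum_congr rfl fun v _ => by
      rw [hsymm u v]
  have h3 : (2:ℝ) * (x ⬝ᵥ (lapl c *ᵥ x)) = ∑ u, ∑ v, c u v * (x u - x v)^2 := by
    rw [two_mul]; nth_rewrite 1 [h1]; rw [h2, ← Finset.sum_add_distrib]
    refine Finset.sum_congr rfl fun u _ => ?_
    rw [← Finset.sum_add_distrib]
    exact Finset.sum_congr rfl fun v _ => by ring
  linarith

lemma lapl_quad_zero {V : Type*} [Fintype V] [DecidableEq V] (c : V → V → ℝ)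
    (hsymm : ∀ u v, c u v = c v u) (hnonneg : ∀ u v, 0 ≤ c u v)
    (hdiag : ∀ v, c v v = 0) (x : V → ℝ)
    (h : x ⬝ᵥ (lapl c *ᵥ x) = 0) : lapl c *ᵥ x = 0 := by
  rw [lapl_quad c hsymm hdiag] at h
  have hterm : ∀ u ∈ Finset.univ, ∀ v ∈ Finset.univ, c u v * (x u - x v)^2 = 0 := by
    have h0 : ∑ u, ∑ v, c u v * (x u - x v)^2 = 0 := by linarith
    have hnn : ∀ u ∈ (Finset.univ : Finset V), 0 ≤ ∑ v, c u v * (x u - x v)^2 := by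
      intro u _
      exact Finset.sum_nonneg fun v _ => mul_nonneg (hnonneg u v) (sq_nonneg _)
    intro u hu v hv
    have := (Finset.sum_eq_zero_iff_of_nonneg hnn).mp h0 u hu
    exact (Finset.sum_eq_zero_iff_of_nonneg
      (fun v _ => mul_nonneg (hnonneg u v) (sq_nonneg _))).mp this v hv
  funext u
  rw [lapl_mulVec c hdiag]
  refine Finset.sum_eq_zero fun v _ => ?_
  have := hterm u (Finset.mem_univ u) v (Finset.mem_univ v)
  rcases mul_eq_zero.mp this with hc | hd
  · rw [hc, zero_mul]
  · rw [pow_eq_zero_iff (two_ne_zero)] at hd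
    rw [hd, mul_zero]

lemma pinv_solve {n : Type*} [Fintype n] [Nonempty n] (A P : Matrix n n ℝ)
    (hA : Aᵀ = A) (hP : IsMPInv A P)
    (hones : A *ᵥ (fun _ => (1:ℝ)) = 0)
    (hker : ∀ z : n → ℝ, A *ᵥ z = 0 → ∃ k : ℝ, ∀ i, z i = k)
    (b : n → ℝ) (hb : ∑ i, b i = 0) : A *ᵥ (P *ᵥ b) = b := by
  obtain ⟨hP1, hP2, hP3, hP4⟩ := hP
  have key : A * (A * P) = A := by
    calc A * (A * P) = Aᵀ * (A * P)ᵀ := by rw [hA, hP3]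
      _ = ((A * P) * A)ᵀ := by rw [← transpose_mul]
      _ = Aᵀ := by rw [hP1]
      _ = A := hA
  set z := b - A *ᵥ (P *ᵥ b) with hzdef
  have hz : A *ᵥ z = 0 := by
    rw [hzdef, mulVec_sub, mulVec_mulVec, mulVec_mulVec, Matrix.mul_assoc, key,
      sub_self]
  obtain ⟨k, hk⟩ := hker z hz
  have hsum1 : ∑ i, (A *ᵥ (P *ᵥ b)) i = 0 := by
    have : ∑ i, (A *ᵥ (P *ᵥ b)) i = (fun _ => (1:ℝ)) ⬝ᵥ (A *ᵥ (P *ᵥ b)) := by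
      simp [dotProduct]
    rw [this, dotProduct_mulVec, ← mulVec_transpose, hA, hones]
    simp
  have hzsum : ∑ i, z i = 0 := by
    simp only [hzdef, Pi.sub_apply, Finset.sum_sub_distrib, hb, hsum1, sub_zero]
  have hcard : (0:ℝ) < (Fintype.card n : ℝ) := by
    exact_mod_cast Fintype.card_pos
  have hck : ((Fintype.card n : ℝ)) * k = 0 := by
    rw [← hzsum, Finset.sum_congr rfl fun i _ => hk i]
    simp [Finset.sum_const, mul_comm]
  have hk0 : k = 0 := (mul_eq_zero.mp hck).resolve_left (ne_of_gt hcard)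
  have hz0 : z = 0 := funext fun i => by rw [hk i, hk0]; rfl
  rw [hzdef, sub_eq_zero] at hz0
  exact hz0.symm

/-- Quadratic forms in the pseudoinverse are preserved under Schur complementation,
for vectors supported on `S` that are orthogonal to the all-ones vector. -/
theorem quadform_pinv_schur {V : Type*} [Fintype V] [DecidableEq V]
    (c : V → V → ℝ) (hsymm : ∀ u v, c u v = c v u) (hnonneg : ∀ u v, 0 ≤ c u v)
    (hdiag : ∀ v, c v v = 0) (hconn : LapConnected (lapl c))
    (S : Set V) (hS : S.Nonempty)
    (x : V → ℝ) (hsupp : ∀ v, v ∉ S → x v = 0) (hsum : ∑ v, x v = 0)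
    (M : Matrix V V ℝ) (hM : IsMPInv (lapl c) M)
    (N : Matrix S S ℝ) (hN : IsMPInv (schur (lapl c) S) N) :
    x ⬝ᵥ (M *ᵥ x) = (fun i : S => x i.1) ⬝ᵥ (N *ᵥ fun i : S => x i.1) := by
  classical
  haveI : Nonempty V := ⟨hS.choose⟩
  haveI : Nonempty S := ⟨⟨hS.choose, hS.choose_spec⟩⟩
  set A := Matrix.of fun i j : S => lapl c i.1 j.1 with hA
  set B := Matrix.of fun (i : S) (j : {v : V // v ∉ S}) => lapl c i.1 j.1 with hBdef
  set C := Matrix.of fun (i : {v : V // v ∉ S}) (j : S) => lapl c i.1 j.1 with hCdef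
  set D := Matrix.of fun i j : {v : V // v ∉ S} => lapl c i.1 j.1 with hDdef
  have hschur : schur (lapl c) S = A - B * D⁻¹ * C := rfl
  rw [hschur] at hN
  -- block decomposition of mulVec
  have hblockS : ∀ (v : V → ℝ) (i : S),
      (lapl c *ᵥ v) i.1 = (A *ᵥ fun a : S => v a.1) i
        + (B *ᵥ fun b : {u : V // u ∉ S} => v b.1) i := by
    intro v i
    rw [hA, hBdef]
    simp only [mulVec, dotProduct, of_apply]
    exact qps_sum_split (· ∈ S) (fun w => lapl c i.1 w * v w)
  have hblockT : ∀ (v : V → ℝ) (j : {u : V // u ∉ S}),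
      (lapl c *ᵥ v) j.1 = (C *ᵥ fun a : S => v a.1) j
        + (D *ᵥ fun b : {u : V // u ∉ S} => v b.1) j := by
    intro v j
    rw [hCdef, hDdef]
    simp only [mulVec, dotProduct, of_apply]
    exact qps_sum_split (· ∈ S) (fun w => lapl c j.1 w * v w)
  have hqz : ∀ v : V → ℝ, v ⬝ᵥ (lapl c *ᵥ v) = 0 → ∃ k : ℝ, ∀ u, v u = k :=
    fun v h => hconn v (lapl_quad_zero c hsymm hnonneg hdiag v h)
  -- D is invertible
  have hD : D.det ≠ 0 := by
    intro hdet
    obtain ⟨w, hw0, hw⟩ := Matrix.exists_mulVec_eq_zero_iff.mpr hdet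
    set v : V → ℝ := fun u => if h : u ∈ S then 0 else w ⟨u, h⟩ with hvdef
    have hvS : (fun a : S => v a.1) = fun _ => 0 := funext fun a => dif_pos a.2
    have hvT : (fun b : {u : V // u ∉ S} => v b.1) = w := funext fun b => dif_neg b.2
    have hquad : v ⬝ᵥ (lapl c *ᵥ v) = 0 := by
      have e2 : ∀ b : {u : V // u ∉ S}, (lapl c *ᵥ v) b.1 = 0 := by
        intro b
        rw [hblockT v b, hvS, hvT, hw]
        simp [mulVec, dotProduct]
      show ∑ u, v u * (lapl c *ᵥ v) u = 0
      rw [qps_sum_split (· ∈ S) (fun u => v u * (lapl c *ᵥ v) u)]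
      have e1 : ∑ a : S, v a.1 * (lapl c *ᵥ v) a.1 = 0 :=
        Finset.sum_eq_zero fun a _ => by rw [congrFun hvS a]; simp
      have e3 : ∑ b : {u : V // u ∉ S}, v b.1 * (lapl c *ᵥ v) b.1 = 0 :=
        Finset.sum_eq_zero fun b _ => by rw [e2 b, mul_zero]
      rw [e1, e3, add_zero]
    obtain ⟨k, hk⟩ := hqz v hquad
    have hk0 : k = 0 := by
      obtain ⟨s0, hs0⟩ := hS
      rw [← hk s0]
      exact dif_pos hs0
    exact hw0 (funext fun b => by
      rw [← congrFun hvT b]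
      rw [hk b.1, hk0]; rfl)
  have hDunit : IsUnit D.det := isUnit_iff_ne_zero.mpr hD
  have hDl : D⁻¹ * D = 1 := Matrix.nonsing_inv_mul D hDunit
  have hDr : D * D⁻¹ = 1 := Matrix.mul_nonsing_inv D hDunit
  -- transposes
  have hAt : Aᵀ = A := by
    rw [hA]; ext i j
    simp only [transpose_apply, of_apply]
    exact lapl_apply_symm c hsymm _ _
  have hDsym : Dᵀ = D := by
    rw [hDdef]; ext i j
    simp only [transpose_apply, of_apply]
    exact lapl_apply_symm c hsymm _ _
  have hCt : Cᵀ = B := by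
    rw [hCdef, hBdef]; ext i j
    simp only [transpose_apply, of_apply]
    exact lapl_apply_symm c hsymm _ _
  have hBt : Bᵀ = C := by
    rw [hCdef, hBdef]; ext i j
    simp only [transpose_apply, of_apply]
    exact lapl_apply_symm c hsymm _ _
  have hSchT : (A - B * D⁻¹ * C)ᵀ = A - B * D⁻¹ * C := by
    rw [transpose_sub, transpose_mul, transpose_mul, transpose_nonsing_inv,
      hDsym, hCt, hBt, hAt, ← Matrix.mul_assoc]
  -- action of the Schur complement
  have hschur_apply : ∀ v : V → ℝ, (∀ j : {u : V // u ∉ S}, (lapl c *ᵥ v) j.1 = 0) →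
      ∀ i : S, ((A - B * D⁻¹ * C) *ᵥ fun a : S => v a.1) i = (lapl c *ᵥ v) i.1 := by
    intro v hv i
    have hT : D *ᵥ (fun b : {u : V // u ∉ S} => v b.1)
        = -(C *ᵥ fun a : S => v a.1) := by
      funext j
      have h1 := hblockT v j
      rw [hv j] at h1
      simp only [Pi.neg_apply]
      linarith
    have hvT : (fun b : {u : V // u ∉ S} => v b.1)
        = -(D⁻¹ *ᵥ (C *ᵥ fun a : S => v a.1)) := by
      calc (fun b : {u : V // u ∉ S} => v b.1)
          = D⁻¹ *ᵥ (D *ᵥ fun b : {u : V // u ∉ S} => v b.1) := by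
            rw [mulVec_mulVec, hDl, one_mulVec]
        _ = -(D⁻¹ *ᵥ (C *ᵥ fun a : S => v a.1)) := by rw [hT, mulVec_neg]
    rw [hblockS v i, hvT]
    simp only [mulVec_neg, mulVec_mulVec, Matrix.sub_mulVec, Matrix.mul_assoc,
      Pi.sub_apply, Pi.neg_apply, Pi.add_apply]
    ring
  -- schur kills constants
  have honesS : (A - B * D⁻¹ * C) *ᵥ (fun _ => (1:ℝ)) = 0 := by
    have hh : ∀ j : {u : V // u ∉ S}, (lapl c *ᵥ (fun _ => (1:ℝ))) j.1 = 0 := by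
      intro j; rw [lapl_ones c hdiag]; rfl
    funext i
    have h2 := hschur_apply (fun _ => (1:ℝ)) hh i
    rw [lapl_ones c hdiag] at h2
    exact h2
  -- kernel of schur is constants
  have hkerS : ∀ w : S → ℝ, (A - B * D⁻¹ * C) *ᵥ w = 0 → ∃ k : ℝ, ∀ i, w i = k := by
    intro w hw
    set vT : {u : V // u ∉ S} → ℝ := -(D⁻¹ *ᵥ (C *ᵥ w)) with hvTdef
    set v : V → ℝ := fun u => if h : u ∈ S then w ⟨u, h⟩ else vT ⟨u, h⟩ with hvdef
    have hvS : (fun a : S => v a.1) = w := funext fun a => dif_pos a.2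
    have hvT : (fun b : {u : V // u ∉ S} => v b.1) = vT := funext fun b => dif_neg b.2
    have hLv : lapl c *ᵥ v = 0 := by
      funext u
      show (lapl c *ᵥ v) u = 0
      by_cases h : u ∈ S
      · have h1 := hblockS v ⟨u, h⟩
        rw [hvS, hvT] at h1
        have h2 := congrFun hw (⟨u, h⟩ : S)
        rw [Matrix.sub_mulVec] at h2
        simp only [Pi.sub_apply, Pi.zero_apply] at h2
        rw [h1, hvTdef]
        simp only [mulVec_neg, mulVec_mulVec, Pi.neg_apply, Pi.add_apply,
          Matrix.mul_assoc] at h2 ⊢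
        linarith
      · have h1 := hblockT v ⟨u, h⟩
        rw [hvS, hvT] at h1
        rw [h1, hvTdef]
        simp only [mulVec_neg, mulVec_mulVec, Pi.neg_apply, Pi.add_apply]
        rw [← Matrix.mul_assoc, hDr, Matrix.one_mul]
        ring
    obtain ⟨k, hk⟩ := hconn v hLv
    exact ⟨k, fun i => by rw [← congrFun hvS i]; exact hk i.1⟩
  -- solve the two systems
  have hLy : lapl c *ᵥ (M *ᵥ x) = x :=
    pinv_solve (lapl c) M (lapl_symm c hsymm) hM (lapl_ones c hdiag) hconn x hsum
  have hxT : ∀ j : {u : V // u ∉ S}, x j.1 = 0 := fun j => hsupp j.1 j.2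
  have hxSsum : ∑ i : S, x i.1 = 0 := by
    have hsp := qps_sum_split (· ∈ S) x
    have hT0 : ∑ j : {u : V // ¬ u ∈ S}, x j.1 = 0 :=
      Finset.sum_eq_zero fun j _ => hxT j
    rw [hsum, hT0, add_zero] at hsp
    exact hsp.symm
  have hNx : (A - B * D⁻¹ * C) *ᵥ (N *ᵥ fun i : S => x i.1) = fun i : S => x i.1 :=
    pinv_solve _ N hSchT hN honesS hkerS _ hxSsum
  have hyS : (A - B * D⁻¹ * C) *ᵥ (fun i : S => (M *ᵥ x) i.1) = fun i : S => x i.1 := by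
    funext i
    have h2 := hschur_apply (M *ᵥ x) (fun j => by rw [hLy]; exact hxT j) i
    rw [hLy] at h2
    exact h2
  have hker0 : (A - B * D⁻¹ * C) *ᵥ
      ((N *ᵥ fun i : S => x i.1) - fun i : S => (M *ᵥ x) i.1) = 0 := by
    rw [mulVec_sub, hNx, hyS, sub_self]
  obtain ⟨k, hk⟩ := hkerS _ hker0
  have hNexp : ∀ i : S, (N *ᵥ fun i : S => x i.1) i = (M *ᵥ x) i.1 + k := by
    intro i
    have h := hk i
    simp only [Pi.sub_apply] at h
    linarith
  have hdotx : x ⬝ᵥ (M *ᵥ x) = ∑ i : S, x i.1 * (M *ᵥ x) i.1 := by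
    show ∑ u, x u * (M *ᵥ x) u = _
    rw [qps_sum_split (· ∈ S) (fun u => x u * (M *ᵥ x) u)]
    have hT0 : ∑ j : {u : V // ¬ u ∈ S}, x j.1 * (M *ᵥ x) j.1 = 0 :=
      Finset.sum_eq_zero fun j _ => by rw [hxT j, zero_mul]
    rw [hT0, add_zero]
  show x ⬝ᵥ (M *ᵥ x) = ∑ i : S, x i.1 * (N *ᵥ fun i : S => x i.1) i
  rw [hdotx]
  have hre : ∑ i : S, x i.1 * (N *ᵥ fun i : S => x i.1) i
      = ∑ i : S, (x i.1 * (M *ᵥ x) i.1 + x i.1 * k) :=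
    Finset.sum_congr rfl fun i _ => by rw [hNexp i]; ring
  rw [hre, Finset.sum_add_distrib, ← Finset.sum_mul, hxSsum, zero_mul, add_zero]
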